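/- Let A ∈ ℝ^{m×n} have columns of unit Euclidean norm, let μ(A) = max_{i≠j} |⟨A_i, A_j⟩| be its coherence, and suppose x₀ ∈ ℝⁿ satisfies ‖x₀‖₀ < (1/2)(1 + 1/μ(A)) with I₀ = supp(x₀) and A_{I₀} of full column rank. Define b̄ = A x₀ and s₀ = (x₀)_{I₀}. Then there exists λ_max ∈ (0, +∞] such that for every λ ∈ [0, λ_max), the vector x̄ with x̄_{I₀} = s₀ − λ (A_{I₀}^T A_{I₀})^{-1} sgn(s₀) and x̄_{I₀^C} = 0 satisfies sgn(x̄_{I₀}) = sgn(s₀) and is a minimizer of x ↦ (1/2)‖Ax − b̄‖² + λ‖x‖₁. -/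
import Mathlib


open Finset Matrix

/-- The ℓ1-norm on ℝⁿ. -/
def l1 {n : ℕ} (x : Fin n → ℝ) : ℝ := ∑ i, |x i|

lemma real_sign_mul_self (t : ℝ) : Real.sign t * t = |t| := by
  rcases lt_trichotomy t 0 with h | h | h
  · rw [Real.sign_of_neg h, abs_of_neg h]; ring
  · simp [h]
  · rw [Real.sign_of_pos h, abs_of_pos h]; ring

lemma real_abs_sign_le (t : ℝ) : |Real.sign t| ≤ 1 := by
  rcases lt_trichotomy t 0 with h | h | h
  · rw [Real.sign_of_neg h]; norm_num
  · simp [h]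
  · rw [Real.sign_of_pos h]; norm_num

lemma real_sign_sub_of_abs_lt {x y : ℝ} (h : |y| < |x|) :
    Real.sign (x - y) = Real.sign x := by
  rcases lt_trichotomy x 0 with hx | hx | hx
  · have hy := abs_lt.mp h
    rw [abs_of_neg hx] at hy
    rw [Real.sign_of_neg (by linarith [hy.1] : x - y < 0), Real.sign_of_neg hx]
  · exfalso; rw [hx, abs_zero] at h; exact absurd h (abs_nonneg y).not_gt
  · have hy := abs_lt.mp h
    rw [abs_of_pos hx] at hy
    rw [Real.sign_of_pos (by linarith [hy.2] : 0 < x - y), Real.sign_of_pos hx]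

theorem fuchs_lasso_solution_path {m n : ℕ} (A : Matrix (Fin m) (Fin n) ℝ)
    (x₀ : Fin n → ℝ) (μ : ℝ) (hμ : 0 < μ)
    (hunit : ∀ i, ∑ j, (A j i)^2 = 1)
    (hcoh : ∀ i j, i ≠ j → |∑ k, A k i * A k j| ≤ μ)
    (hsparse : ((Finset.univ.filter (fun i => x₀ i ≠ 0)).card : ℝ) < (1/2) * (1 + 1/μ))
    (G : Matrix {i // x₀ i ≠ 0} {i // x₀ i ≠ 0} ℝ)
    (hG : ∀ i j, G i j = ∑ k, A k i.1 * A k j.1)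
    (hrank : IsUnit G.det)
    (w : Fin n → ℝ)
    (hw : ∀ i, w i = if h : x₀ i ≠ 0 then
      Matrix.mulVec G⁻¹ (fun j => Real.sign (x₀ j.1)) ⟨i, h⟩ else 0) :
    ∃ lmax : ENNReal, 0 < lmax ∧ ∀ lam : ℝ, 0 ≤ lam → ENNReal.ofReal lam < lmax →
      (∀ i, Real.sign (x₀ i - lam * w i) = Real.sign (x₀ i)) ∧
      (∀ x : Fin n → ℝ,
        (1/2) * (∑ j, (A.mulVec (x₀ - lam • w) j - A.mulVec x₀ j)^2)
          + lam * l1 (x₀ - lam • w) ≤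
        (1/2) * (∑ j, (A.mulVec x j - A.mulVec x₀ j)^2) + lam * l1 x) := by
  classical
  set sgn : {i // x₀ i ≠ 0} → ℝ := fun j => Real.sign (x₀ j.1) with hsgn
  set c : {i // x₀ i ≠ 0} → ℝ := Matrix.mulVec G⁻¹ sgn with hc_def
  have hGc : G.mulVec c = sgn := by
    rw [hc_def, Matrix.mulVec_mulVec, Matrix.mul_nonsing_inv _ hrank, Matrix.one_mulVec]
  set K : ℝ := (Fintype.card {i // x₀ i ≠ 0} : ℝ) with hK_def
  have hKcard : (Fintype.card {i // x₀ i ≠ 0} : ℝ)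
      = ((Finset.univ.filter (fun i => x₀ i ≠ 0)).card : ℝ) := by
    norm_cast
    exact Fintype.card_subtype _
  have hK0 : 0 ≤ K := Nat.cast_nonneg _
  have h1μ : μ * (1/μ) = 1 := mul_one_div_cancel hμ.ne'
  have hKs : K < (1/2) * (1 + 1/μ) := by rw [hK_def, hKcard]; exact hsparse
  have hK1 : μ * (2*K - 1) < 1 := by nlinarith
  have hden : 0 < 1 - μ * (K - 1) := by nlinarith
  -- bound on c
  have hc : ∀ j : {i // x₀ i ≠ 0}, |c j| ≤ 1 / (1 - μ * (K - 1)) := by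
    intro j
    obtain ⟨j₀, -, hj₀⟩ := Finset.exists_max_image Finset.univ (fun l => |c l|) ⟨j, mem_univ j⟩
    have hcardpos : 1 ≤ Fintype.card {i // x₀ i ≠ 0} := Fintype.card_pos_iff.mpr ⟨j⟩
    have hGeq : ∑ l, G j₀ l * c l = sgn j₀ := congrFun hGc j₀
    have hdiag : G j₀ j₀ = 1 := by
      rw [hG]
      calc ∑ k, A k j₀.1 * A k j₀.1 = ∑ k, (A k j₀.1)^2 := by
            apply Finset.sum_congr rfl; intro k _; ring
        _ = 1 := hunit j₀.1
    have hsplit : c j₀ = sgn j₀ - ∑ l ∈ Finset.univ.erase j₀, G j₀ l * c l := by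
      rw [← hGeq, ← Finset.add_sum_erase _ _ (mem_univ j₀), hdiag, one_mul]; ring
    have hsum : |∑ l ∈ Finset.univ.erase j₀, G j₀ l * c l| ≤ (K - 1) * (μ * |c j₀|) := by
      calc |∑ l ∈ Finset.univ.erase j₀, G j₀ l * c l|
          ≤ ∑ l ∈ Finset.univ.erase j₀, |G j₀ l * c l| := Finset.abs_sum_le_sum_abs _ _
        _ ≤ ∑ l ∈ Finset.univ.erase j₀, μ * |c j₀| := by
            apply Finset.sum_le_sum
            intro l hl
            rw [abs_mul]
            have hne : j₀.1 ≠ l.1 := fun h =>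
              (Finset.ne_of_mem_erase hl) (Subtype.ext h.symm)
            have h1 : |G j₀ l| ≤ μ := by rw [hG]; exact hcoh _ _ hne
            exact mul_le_mul h1 (hj₀ l (mem_univ l)) (abs_nonneg _) hμ.le
        _ = ((Finset.univ.erase j₀).card : ℝ) * (μ * |c j₀|) := by
            rw [Finset.sum_const, nsmul_eq_mul]
        _ = (K - 1) * (μ * |c j₀|) := by
            rw [Finset.card_erase_of_mem (mem_univ j₀), Finset.card_univ]
            rw [Nat.cast_sub hcardpos]
            norm_num [hK_def]
    have hb : |c j₀| ≤ 1 + μ * (K - 1) * |c j₀| := by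
      calc |c j₀| = |sgn j₀ - ∑ l ∈ Finset.univ.erase j₀, G j₀ l * c l| := by rw [← hsplit]
        _ ≤ |sgn j₀| + |∑ l ∈ Finset.univ.erase j₀, G j₀ l * c l| := abs_sub _ _
        _ ≤ 1 + μ * (K - 1) * |c j₀| := by
            have h1 := real_abs_sign_le (x₀ j₀.1)
            have h2 := hsum
            nlinarith
    have hfin : |c j₀| ≤ 1 / (1 - μ * (K - 1)) := by
      rw [le_div_iff₀ hden]; nlinarith
    exact le_trans (hj₀ j (mem_univ j)) hfin
  -- the dual certificate
  set g : Fin n → ℝ := fun i => ∑ l : {i // x₀ i ≠ 0}, (∑ k, A k i * A k l.1) * c l with hg_def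
  have hg_supp : ∀ i, (h : x₀ i ≠ 0) → g i = Real.sign (x₀ i) := by
    intro i h
    have h1 : g i = ∑ l, G ⟨i, h⟩ l * c l := by
      apply Finset.sum_congr rfl; intro l _; rw [hG]
    rw [h1]
    exact congrFun hGc ⟨i, h⟩
  have hg_le : ∀ i, |g i| ≤ 1 := by
    intro i
    by_cases h : x₀ i ≠ 0
    · rw [hg_supp i h]; exact real_abs_sign_le _
    · push_neg at h
      have hb : |g i| ≤ K * (μ * (1 / (1 - μ * (K - 1)))) := by
        calc |g i| ≤ ∑ l : {i // x₀ i ≠ 0}, |(∑ k, A k i * A k l.1) * c l| :=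
              Finset.abs_sum_le_sum_abs _ _
          _ ≤ ∑ _l : {i // x₀ i ≠ 0}, μ * (1 / (1 - μ * (K - 1))) := by
              apply Finset.sum_le_sum
              intro l _
              rw [abs_mul]
              have hne : i ≠ l.1 := fun he => l.2 (he ▸ h)
              exact mul_le_mul (hcoh _ _ hne) (hc l) (abs_nonneg _) hμ.le
          _ = K * (μ * (1 / (1 - μ * (K - 1)))) := by
              rw [Finset.sum_const, nsmul_eq_mul, Finset.card_univ]
      have h2 : K * (μ * (1 / (1 - μ * (K - 1)))) ≤ 1 := by
        rw [mul_one_div, ← mul_div_assoc, div_le_one hden]; nlinarith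
      linarith
  have hw0 : ∀ i, x₀ i = 0 → w i = 0 := by
    intro i h; rw [hw i, dif_neg (by simpa using h)]
  have hwsupp : ∀ (l : {i // x₀ i ≠ 0}), w l.1 = c l := by
    intro l
    rw [hw l.1, dif_pos l.2]
  -- relation between g and A
  have hAg : ∀ i, ∑ j, A j i * A.mulVec w j = g i := by
    intro i
    have h1 : ∑ j, A j i * A.mulVec w j = ∑ l, (∑ j, A j i * A j l) * w l := by
      simp only [Matrix.mulVec, dotProduct, Finset.mul_sum]
      rw [Finset.sum_comm]
      apply Finset.sum_congr rfl
      intro l _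
      rw [Finset.sum_mul]
      apply Finset.sum_congr rfl
      intro j _; ring
    rw [h1]
    have h2 : ∑ l ∈ Finset.univ.filter (fun l => x₀ l ≠ 0), (∑ j, A j i * A j l) * w l
        = ∑ l : Fin n, (∑ j, A j i * A j l) * w l := by
      apply Finset.sum_filter_of_ne
      intro l _ hne h0
      rw [hw0 l h0, mul_zero] at hne
      exact hne rfl
    rw [← h2]
    rw [Finset.sum_subtype (p := fun l => x₀ l ≠ 0) _ (fun l => by simp)
      (fun l => (∑ j, A j i * A j l) * w l)]
    apply Finset.sum_congr rfl
    intro l _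
    rw [hwsupp l]
  -- choice of lmax
  set S := Finset.univ.filter (fun i => x₀ i ≠ 0) with hS_def
  set ε : ℝ := if h : S.Nonempty then S.inf' h (fun i => |x₀ i| / (|w i| + 1)) else 1
    with hε_def
  have hεpos : 0 < ε := by
    rw [hε_def]
    split
    · rename_i h
      rw [Finset.lt_inf'_iff]
      intro i hi
      have : x₀ i ≠ 0 := (Finset.mem_filter.mp hi).2
      positivity
    · norm_num
  refine ⟨ENNReal.ofReal ε, ENNReal.ofReal_pos.mpr hεpos, ?_⟩
  intro lam hlam hlt
  have hlamε : lam < ε := (ENNReal.ofReal_lt_ofReal_iff hεpos).mp hlt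
  have hsmall : ∀ i, x₀ i ≠ 0 → |lam * w i| < |x₀ i| := by
    intro i h
    have hiS : i ∈ S := Finset.mem_filter.mpr ⟨mem_univ i, h⟩
    have h1 : ε ≤ |x₀ i| / (|w i| + 1) := by
      rw [hε_def, dif_pos ⟨i, hiS⟩]
      exact Finset.inf'_le _ hiS
    have h2 : lam < |x₀ i| / (|w i| + 1) := lt_of_lt_of_le hlamε h1
    have h3 : lam * (|w i| + 1) < |x₀ i| := by
      rw [← lt_div_iff₀ (by positivity)]; exact h2
    rw [abs_mul, abs_of_nonneg hlam]
    nlinarith [abs_nonneg (w i)]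
  have hsign : ∀ i, Real.sign (x₀ i - lam * w i) = Real.sign (x₀ i) := by
    intro i
    by_cases h : x₀ i ≠ 0
    · exact real_sign_sub_of_abs_lt (hsmall i h)
    · push_neg at h
      rw [h, hw0 i h]; norm_num
  refine ⟨hsign, ?_⟩
  intro x
  set xb : Fin n → ℝ := x₀ - lam • w with hxb_def
  have hxb : ∀ i, xb i = x₀ i - lam * w i := by
    intro i; simp [hxb_def]
  set d : Fin n → ℝ := x - xb with hd_def
  have hd : ∀ i, d i = x i - xb i := by intro i; simp [hd_def]
  have hr : ∀ j, A.mulVec xb j - A.mulVec x₀ j = -(lam * A.mulVec w j) := by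
    intro j
    simp [hxb_def, Matrix.mulVec_sub, Matrix.mulVec_smul]
  have hAd : ∀ j, A.mulVec x j - A.mulVec x₀ j
      = (A.mulVec xb j - A.mulVec x₀ j) + A.mulVec d j := by
    intro j
    simp [hd_def, Matrix.mulVec_sub]
  -- cross term
  have hcross : ∑ j, (A.mulVec xb j - A.mulVec x₀ j) * A.mulVec d j
      = -(lam * ∑ i, g i * d i) := by
    have h1 : ∑ j, A.mulVec w j * A.mulVec d j = ∑ i, g i * d i := by
      calc ∑ j, A.mulVec w j * A.mulVec d j
          = ∑ j, ∑ i, (A j i * A.mulVec w j) * d i := by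
            apply Finset.sum_congr rfl
            intro j _
            conv_lhs => rw [show A.mulVec d j = ∑ i, A j i * d i from rfl]
            rw [Finset.mul_sum]
            apply Finset.sum_congr rfl
            intro i _; ring
        _ = ∑ i, (∑ j, A j i * A.mulVec w j) * d i := by
            rw [Finset.sum_comm]
            apply Finset.sum_congr rfl
            intro i _
            rw [Finset.sum_mul]
        _ = ∑ i, g i * d i := by
            apply Finset.sum_congr rfl
            intro i _
            rw [hAg i]
    calc ∑ j, (A.mulVec xb j - A.mulVec x₀ j) * A.mulVec d j
        = ∑ j, -(lam * (A.mulVec w j * A.mulVec d j)) := by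
          apply Finset.sum_congr rfl
          intro j _
          rw [hr j]; ring
      _ = -(lam * ∑ j, A.mulVec w j * A.mulVec d j) := by
          rw [Finset.sum_neg_distrib, Finset.mul_sum]
      _ = -(lam * ∑ i, g i * d i) := by rw [h1]
  -- quadratic expansion
  have hquad : ∑ j, (A.mulVec x j - A.mulVec x₀ j)^2
      = ∑ j, (A.mulVec xb j - A.mulVec x₀ j)^2
        + 2 * (∑ j, (A.mulVec xb j - A.mulVec x₀ j) * A.mulVec d j)
        + ∑ j, (A.mulVec d j)^2 := by
    have he : ∀ j, (A.mulVec x j - A.mulVec x₀ j)^2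
        = (A.mulVec xb j - A.mulVec x₀ j)^2
          + 2 * ((A.mulVec xb j - A.mulVec x₀ j) * A.mulVec d j)
          + (A.mulVec d j)^2 := by
      intro j; rw [hAd j]; ring
    simp only [he, Finset.sum_add_distrib, ← Finset.mul_sum]
  have hQ : 0 ≤ ∑ j, (A.mulVec d j)^2 := Finset.sum_nonneg (fun j _ => sq_nonneg _)
  -- l1 bounds
  have hgx : ∑ i, g i * x i ≤ l1 x := by
    rw [l1]
    apply Finset.sum_le_sum
    intro i _
    calc g i * x i ≤ |g i * x i| := le_abs_self _
      _ = |g i| * |x i| := abs_mul _ _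
      _ ≤ 1 * |x i| := mul_le_mul_of_nonneg_right (hg_le i) (abs_nonneg _)
      _ = |x i| := one_mul _
  have hgxb : ∑ i, g i * xb i = l1 xb := by
    rw [l1]
    apply Finset.sum_congr rfl
    intro i _
    by_cases h : x₀ i ≠ 0
    · rw [hg_supp i h]
      have h1 : Real.sign (x₀ i) = Real.sign (xb i) := by rw [hxb i, hsign i]
      rw [h1, real_sign_mul_self]
    · push_neg at h
      rw [hxb i, h, hw0 i h]
      norm_num
  have hgd : ∑ i, g i * d i = ∑ i, g i * x i - ∑ i, g i * xb i := by
    rw [← Finset.sum_sub_distrib]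
    apply Finset.sum_congr rfl
    intro i _
    rw [hd i]; ring
  have hmul : lam * (∑ i, g i * x i) ≤ lam * l1 x := mul_le_mul_of_nonneg_left hgx hlam
  have h5 : lam * (∑ i, g i * d i) = lam * (∑ i, g i * x i) - lam * l1 xb := by
    rw [hgd, ← hgxb]; ring
  rw [hquad, hcross]
  linarith
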